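/- Let T be a finite rooted tree. For a random walk from the root that, at each internal node with d children, moves to a uniformly random child until reaching a leaf, the output defined as the product of the branching factors d along the path is an unbiased estimator of the number of leaves of T: its expected value equals the number of leaves. -/

import Mathlib

/-- A finite rooted tree: a node together with its list of child subtrees.
A node with no children is a leaf; every internal node has at least one child. -/
inductive RTree where
  | node : List RTree → RTree

namespace RTree

/-- The children of the root. -/
def children : RTree → List RTree
  | node cs => cs

/-- The number of leaves of a finite rooted tree. -/
def leaves : RTree → ℕ
  | node [] => 1
  | node (c :: cs) => ((c :: cs).attach.map (fun x => leaves x.1)).sum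
decreasing_by
  all_goals
    have h := List.sizeOf_lt_of_mem x.2
    simp only [List.cons.sizeOf_spec, RTree.node.sizeOf_spec] at h ⊢
    omega

/-- All root-to-leaf random walks of Knuth's estimator, as a list of
(probability, output) pairs: at each internal node with `d` children the walk
moves to a uniformly random child (probability `1/d`) and the output is the
product of the branching factors `d` along the path. -/
noncomputable def walks : RTree → List (ℝ × ℝ)
  | node [] => [(1, 1)]
  | node (c :: cs) =>
      (c :: cs).attach.flatMap (fun x =>
        (walks x.1).map (fun pv =>
          (pv.1 / ((c :: cs).length : ℝ), pv.2 * ((c :: cs).length : ℝ))))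
decreasing_by
  all_goals
    have h := List.sizeOf_lt_of_mem x.2
    simp only [List.cons.sizeOf_spec, RTree.node.sizeOf_spec] at h ⊢
    omega

end RTree

/-- **Knuth's estimator is unbiased**: for a finite rooted tree `t`, the expected
value of the output of the random walk (the product of branching factors along a
uniformly random root-to-leaf path) equals the number of leaves of `t`. -/

theorem knuth_estimator_unbiased (t : RTree) :
    ((RTree.walks t).map (fun pv => pv.1 * pv.2)).sum = (RTree.leaves t : ℝ) := by
  match t with
  | .node [] => simp [RTree.walks, RTree.leaves]
  | .node (c :: cs) =>
    rw [RTree.walks, RTree.leaves]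
    have hn : ((c :: cs).length : ℝ) ≠ 0 := by
      simp only [List.length_cons]
      positivity
    rw [List.map_flatMap, List.flatMap, List.sum_flatten, List.map_map]
    push_cast
    rw [List.map_map]
    congr 1
    apply List.map_congr_left
    intro x hx
    have ih := knuth_estimator_unbiased x.1
    simp only [Function.comp, List.map_map]
    rw [← ih]
    congr 1
    apply List.map_congr_left
    intro pv _
    simp only [Function.comp_apply]
    field_simp
termination_by t
decreasing_by
  all_goals
    have h := List.sizeOf_lt_of_mem x.2
    simp only [List.cons.sizeOf_spec, RTree.node.sizeOf_spec] at h ⊢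
    omega
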